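/- arXiv:2405.01344 — 4 statements merged into one kernel-verified Lean document; each statement's English description precedes it below -/
import Mathlib

section
/- Let G be a connected simple graph containing three pairwise distinct vertices u, v, x that are pairwise false twins (N(u) = N(v) = N(x)). Then G has a resolving set of size at most k if and only if the graph G − x (obtained by deleting x) has a resolving set of size at most k − 1. -/
def resolvingSet {V : Type*} (G : SimpleGraph V) (S : Set V) : Prop :=
  ∀ x y : V, x ≠ y → ∃ w ∈ S, G.dist w x ≠ G.dist w y

private lemma twin_dist_le {V : Type*} (G : SimpleGraph V) (hG : G.Connected) {a b w : V}
    (h : G.neighborSet a ⊆ G.neighborSet b) (hwa : w ≠ a) :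
    G.dist w b ≤ G.dist w a := by
  obtain ⟨p, hp⟩ := (hG w a).exists_walk_length_eq_dist
  obtain ⟨c, hac, q, hq⟩ := SimpleGraph.Walk.exists_eq_cons_of_ne (Ne.symm hwa) p.reverse
  have hbc : G.Adj b c := h hac
  have h1 : G.dist b w ≤ (SimpleGraph.Walk.cons hbc q).length := SimpleGraph.dist_le _
  have h2 : (SimpleGraph.Walk.cons hbc q).length = q.length + 1 := by simp
  have h3 : q.length + 1 = p.reverse.length := by rw [hq, SimpleGraph.Walk.length_cons]
  have h4 : p.reverse.length = p.length := SimpleGraph.Walk.length_reverse _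
  have h5 : G.dist w b = G.dist b w := SimpleGraph.dist_comm
  omega

private lemma twin_dist {V : Type*} (G : SimpleGraph V) (hG : G.Connected) {a b : V}
    (h : G.neighborSet a = G.neighborSet b) :
    ∀ w, w ≠ a → w ≠ b → G.dist w a = G.dist w b :=
  fun _ hwa hwb => le_antisymm (twin_dist_le G hG h.ge hwb) (twin_dist_le G hG h.le hwa)

private lemma induce_dist {V : Type*} [DecidableEq V] (G : SimpleGraph V) (hG : G.Connected) {u x : V}
    (hux : u ≠ x) (htw : G.neighborSet u = G.neighborSet x)
    (hG' : (G.induce {w : V | w ≠ x}).Connected)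
    (a b : ↥{w : V | w ≠ x}) :
    (G.induce {w : V | w ≠ x}).dist a b = G.dist ↑a ↑b := by
  apply le_antisymm
  · obtain ⟨p, hp⟩ := (hG (↑a : V) ↑b).exists_walk_length_eq_dist
    let f : G →g (G.induce {w : V | w ≠ x}) :=
      { toFun := fun y => if h : y = x then ⟨u, hux⟩ else ⟨y, h⟩
        map_rel' := by
          intro p q hpq
          by_cases hp' : p = x <;> by_cases hq' : q = x
          · exact absurd (hp'.trans hq'.symm) hpq.ne
          · simp only [dif_pos hp', dif_neg hq', SimpleGraph.comap_adj,
              Function.Embedding.coe_subtype]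
            have : q ∈ G.neighborSet x := hp' ▸ hpq
            rw [← htw] at this; exact this
          · simp only [dif_neg hp', dif_pos hq', SimpleGraph.comap_adj,
              Function.Embedding.coe_subtype]
            have : p ∈ G.neighborSet x := hq' ▸ hpq.symm
            rw [← htw] at this; exact this.symm
          · simp only [dif_neg hp', dif_neg hq', SimpleGraph.comap_adj,
              Function.Embedding.coe_subtype]
            exact hpq }
    have ha : f ↑a = a := by
      apply Subtype.ext
      show ((if h : (↑a : V) = x then (⟨u, hux⟩ : ↥{w : V | w ≠ x}) else ⟨↑a, h⟩) :
        ↥{w : V | w ≠ x}).1 = (↑a : V)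
      rw [dif_neg (a.2 : (↑a : V) ≠ x)]
    have hb : f ↑b = b := by
      apply Subtype.ext
      show ((if h : (↑b : V) = x then (⟨u, hux⟩ : ↥{w : V | w ≠ x}) else ⟨↑b, h⟩) :
        ↥{w : V | w ≠ x}).1 = (↑b : V)
      rw [dif_neg (b.2 : (↑b : V) ≠ x)]
    have h1 : (G.induce {w : V | w ≠ x}).dist a b ≤ ((p.map f).copy ha hb).length :=
      SimpleGraph.dist_le _
    have h2 : ((p.map f).copy ha hb).length = p.length := by
      rw [SimpleGraph.Walk.length_copy, SimpleGraph.Walk.length_map]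
    rw [h2, hp] at h1
    exact h1
  · obtain ⟨q, hq⟩ := (hG' a b).exists_walk_length_eq_dist
    have h1 : G.dist ↑a ↑b ≤ (q.map (SimpleGraph.Embedding.induce _).toHom).length :=
      SimpleGraph.dist_le _
    rw [SimpleGraph.Walk.length_map, hq] at h1
    exact h1

private lemma forward_resolve {V : Type*} [DecidableEq V]
    (G : SimpleGraph V) (hG : G.Connected)
    (u v x : V) (huv : u ≠ v) (hux : u ≠ x) (hvx : v ≠ x)
    (htw1 : G.neighborSet u = G.neighborSet v)
    (htw2 : G.neighborSet v = G.neighborSet x)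
    (S S₀ : Finset V)
    (hS : resolvingSet G ↑S)
    (memU : u ∈ S₀)
    (hbase : S \ {u, v, x} ⊆ S₀)
    (hV : v ∈ S₀ ∨ ¬(u ∈ S ∧ v ∈ S ∧ x ∈ S)) :
    ∀ a b : V, a ≠ x → b ≠ x → a ≠ b → ∃ w ∈ S₀, G.dist w a ≠ G.dist w b := by
  have htux : G.neighborSet u = G.neighborSet x := htw1.trans htw2
  have tdUV := twin_dist G hG htw1
  have tdUX := twin_dist G hG htux
  have tdVX := twin_dist G hG htw2
  have dOut : ∀ y, y ≠ u → y ≠ v → y ≠ x →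
      G.dist v y = G.dist u y ∧ G.dist x y = G.dist u y := by
    intro y h1 h2 h3
    refine ⟨?_, ?_⟩
    · calc G.dist v y = G.dist y v := SimpleGraph.dist_comm
        _ = G.dist y u := (tdUV y h1 h2).symm
        _ = G.dist u y := SimpleGraph.dist_comm
    · calc G.dist x y = G.dist y x := SimpleGraph.dist_comm
        _ = G.dist y u := (tdUX y h1 h3).symm
        _ = G.dist u y := SimpleGraph.dist_comm
  have base_mem : ∀ w ∈ S, w ≠ u → w ≠ v → w ≠ x → w ∈ S₀ := by
    intro w hw h1 h2 h3
    exact hbase (Finset.mem_sdiff.mpr ⟨hw, by simp [h1, h2, h3]⟩)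
  have dpos : ∀ {p q : V}, p ≠ q → G.dist p q ≠ 0 := fun h => (hG.pos_dist_of_ne h).ne'
  have keyU : ∀ b : V, b ≠ u → ∃ w ∈ S₀, G.dist w u ≠ G.dist w b := by
    intro b hb
    refine ⟨u, memU, ?_⟩
    rw [SimpleGraph.dist_self]
    exact (dpos (Ne.symm hb)).symm
  have keyV : ∀ b : V, b ≠ u → b ≠ v → b ≠ x → ∃ w ∈ S₀, G.dist w v ≠ G.dist w b := by
    intro b hbu hbv hbx
    by_contra hcon
    push_neg at hcon
    obtain ⟨hvb, hxb⟩ := dOut b hbu hbv hbx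
    have huvb : G.dist u v = G.dist u b := hcon u memU
    have hxv_ : G.dist x u = G.dist x v := tdUV x (Ne.symm hux) (Ne.symm hvx)
    have huvx : G.dist u v = G.dist u x := tdVX u huv hux
    have hxv : G.dist x v = G.dist u b := by
      calc G.dist x v = G.dist x u := hxv_.symm
        _ = G.dist u x := SimpleGraph.dist_comm
        _ = G.dist u v := huvx.symm
        _ = G.dist u b := huvb
    obtain ⟨w0, hw0S, hw0⟩ := hS v b hbv.symm
    have hw0S : w0 ∈ S := Finset.mem_coe.mp hw0S
    have hw0v : w0 = v := by
      by_contra h0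
      by_cases h0u : w0 = u
      · exact hw0 (h0u ▸ huvb)
      by_cases h0x : w0 = x
      · rw [h0x] at hw0
        exact hw0 (hxv.trans hxb.symm)
      · exact hw0 (hcon w0 (base_mem w0 hw0S h0u h0 h0x))
    obtain ⟨w1, hw1S, hw1⟩ := hS x b hbx.symm
    have hw1S : w1 ∈ S := Finset.mem_coe.mp hw1S
    have hw1x : w1 = x := by
      by_contra h1
      by_cases h1u : w1 = u
      · rw [h1u] at hw1
        exact hw1 (huvx.symm.trans huvb)
      by_cases h1v : w1 = v
      · rw [h1v] at hw1
        refine hw1 ?_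
        calc G.dist v x = G.dist v u := (tdUX v huv.symm hvx).symm
          _ = G.dist u v := SimpleGraph.dist_comm
          _ = G.dist u b := huvb
          _ = G.dist v b := hvb.symm
      · refine hw1 ?_
        calc G.dist w1 x = G.dist w1 v := (tdVX w1 h1v h1).symm
          _ = G.dist w1 b := hcon w1 (base_mem w1 hw1S h1u h1v h1)
    obtain ⟨w2, hw2S, hw2⟩ := hS u b hbu.symm
    have hw2S : w2 ∈ S := Finset.mem_coe.mp hw2S
    have hw2u : w2 = u := by
      by_contra h2
      by_cases h2v : w2 = v
      · rw [h2v] at hw2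
        refine hw2 ?_
        calc G.dist v u = G.dist u v := SimpleGraph.dist_comm
          _ = G.dist u b := huvb
          _ = G.dist v b := hvb.symm
      by_cases h2x : w2 = x
      · rw [h2x] at hw2
        refine hw2 ?_
        calc G.dist x u = G.dist x v := hxv_
          _ = G.dist u b := hxv
          _ = G.dist x b := hxb.symm
      · refine hw2 ?_
        calc G.dist w2 u = G.dist w2 v := tdUV w2 h2 h2v
          _ = G.dist w2 b := hcon w2 (base_mem w2 hw2S h2 h2v h2x)
    rcases hV with hvS₀ | hnall
    · have h0 := hcon v hvS₀
      rw [SimpleGraph.dist_self] at h0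
      exact dpos hbv.symm h0.symm
    · exact hnall ⟨hw2u ▸ hw2S, hw0v ▸ hw0S, hw1x ▸ hw1S⟩
  have keyOut : ∀ a b : V, a ≠ u → a ≠ v → a ≠ x → b ≠ u → b ≠ v → b ≠ x → a ≠ b →
      ∃ w ∈ S₀, G.dist w a ≠ G.dist w b := by
    intro a b hau hav hax hbu hbv hbx hab
    obtain ⟨w, hwS, hw⟩ := hS a b hab
    have hwS : w ∈ S := Finset.mem_coe.mp hwS
    by_cases hwu : w = u
    · exact ⟨u, memU, hwu ▸ hw⟩
    by_cases hwv : w = v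
    · subst hwv
      refine ⟨u, memU, ?_⟩
      rw [← (dOut a hau hav hax).1, ← (dOut b hbu hbv hbx).1]
      exact hw
    by_cases hwx : w = x
    · subst hwx
      refine ⟨u, memU, ?_⟩
      rw [← (dOut a hau hav hax).2, ← (dOut b hbu hbv hbx).2]
      exact hw
    · exact ⟨w, base_mem w hwS hwu hwv hwx, hw⟩
  intro a b hax' hbx' hab
  by_cases hau : a = u
  · subst hau; exact keyU b (Ne.symm hab)
  by_cases hbu : b = u
  · subst hbu
    obtain ⟨w, hw, hne⟩ := keyU a hau
    exact ⟨w, hw, hne.symm⟩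
  by_cases hav : a = v
  · subst hav; exact keyV b hbu (Ne.symm hab) hbx'
  by_cases hbv : b = v
  · subst hbv
    obtain ⟨w, hw, hne⟩ := keyV a hau hav hax'
    exact ⟨w, hw, hne.symm⟩
  · exact keyOut a b hau hav hax' hbu hbv hbx' hab

theorem stmt_5 {V : Type*} [Fintype V] [DecidableEq V]
    (G : SimpleGraph V) (hG : G.Connected)
    (u v x : V) (huv : u ≠ v) (hux : u ≠ x) (hvx : v ≠ x)
    (htw1 : G.neighborSet u = G.neighborSet v)
    (htw2 : G.neighborSet v = G.neighborSet x)
    (k : ℕ) (hk : 1 ≤ k)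
    (hG' : (G.induce {w : V | w ≠ x}).Connected) :
    (∃ S : Finset V, resolvingSet G ↑S ∧ S.card ≤ k) ↔
      (∃ S : Finset ↥{w : V | w ≠ x},
        resolvingSet (G.induce {w : V | w ≠ x}) ↑S ∧ S.card ≤ k - 1) := by
  haveI : DecidablePred (· ∈ {w : V | w ≠ x}) := fun w => decidable_of_iff (w ≠ x) Iff.rfl
  have hdind := induce_dist G hG hux (htw1.trans htw2) hG'
  constructor
  · rintro ⟨S, hSr, hcard⟩
    obtain ⟨w1, hw1S, hw1⟩ := hSr u v huv
    obtain ⟨w2, hw2S, hw2⟩ := hSr u x hux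
    obtain ⟨w3, hw3S, hw3⟩ := hSr v x hvx
    have hw1' : w1 = u ∨ w1 = v := by
      by_contra hc; push_neg at hc
      exact hw1 (twin_dist G hG htw1 w1 hc.1 hc.2)
    have hw2' : w2 = u ∨ w2 = x := by
      by_contra hc; push_neg at hc
      exact hw2 (twin_dist G hG (htw1.trans htw2) w2 hc.1 hc.2)
    have hw3' : w3 = v ∨ w3 = x := by
      by_contra hc; push_neg at hc
      exact hw3 (twin_dist G hG htw2 w3 hc.1 hc.2)
    have hw1S : w1 ∈ S := Finset.mem_coe.mp hw1S
    have hw2S : w2 ∈ S := Finset.mem_coe.mp hw2S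
    have hw3S : w3 ∈ S := Finset.mem_coe.mp hw3S
    have hpair : ∃ s1 s2 : V, s1 ∈ S ∧ s2 ∈ S ∧ s1 ≠ s2 ∧
        s1 ∈ ({u, v, x} : Finset V) ∧ s2 ∈ ({u, v, x} : Finset V) := by
      rcases hw1' with rfl | rfl
      · rcases hw3' with rfl | rfl
        · exact ⟨w1, w3, hw1S, hw3S, huv, by simp, by simp⟩
        · exact ⟨w1, w3, hw1S, hw3S, hux, by simp, by simp⟩
      · rcases hw2' with rfl | rfl
        · exact ⟨w1, w2, hw1S, hw2S, huv.symm, by simp, by simp⟩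
        · exact ⟨w1, w2, hw1S, hw2S, hvx, by simp, by simp⟩
    obtain ⟨s1, s2, hs1S, hs2S, hs12, hs1m, hs2m⟩ := hpair
    by_cases hall : u ∈ S ∧ v ∈ S ∧ x ∈ S
    · set S₀ : Finset V := insert u (insert v (S \ {u, v, x})) with hS₀def
      have memU : u ∈ S₀ := Finset.mem_insert_self _ _
      have key := forward_resolve G hG u v x huv hux hvx htw1 htw2 S S₀ hSr memU
        (fun w hw => Finset.mem_insert_of_mem (Finset.mem_insert_of_mem hw))
        (Or.inl (Finset.mem_insert_of_mem (Finset.mem_insert_self _ _)))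
      have hnx : ∀ w ∈ S₀, w ≠ x := by
        intro w hw
        rcases Finset.mem_insert.mp hw with rfl | hw
        · exact hux
        rcases Finset.mem_insert.mp hw with rfl | hw
        · exact hvx
        · have := (Finset.mem_sdiff.mp hw).2
          simp only [Finset.mem_insert, Finset.mem_singleton] at this
          push_neg at this
          exact this.2.2
      refine ⟨S₀.subtype _, ?_, ?_⟩
      · intro a b hab
        obtain ⟨w, hwS₀, hne⟩ := key ↑a ↑b a.2 b.2 (fun h => hab (Subtype.ext h))
        refine ⟨⟨w, hnx w hwS₀⟩, Finset.mem_coe.mpr (Finset.mem_subtype.mpr hwS₀), ?_⟩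
        rw [hdind, hdind]
        exact hne
      · have h3 : ({u, v, x} : Finset V) ⊆ S := by
          intro w hw
          simp only [Finset.mem_insert, Finset.mem_singleton] at hw
          rcases hw with rfl | rfl | rfl
          · exact hall.1
          · exact hall.2.1
          · exact hall.2.2
        have hc3 : ({u, v, x} : Finset V).card = 3 := by
          rw [Finset.card_insert_of_notMem (by simp [huv, hux]),
            Finset.card_insert_of_notMem (by simp [hvx]), Finset.card_singleton]
        have hbc : (S \ {u, v, x}).card = S.card - 3 := by
          rw [Finset.card_sdiff_of_subset h3, hc3]
        have hS3 : 3 ≤ S.card := hc3 ▸ Finset.card_le_card h3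
        have h1 : S₀.card ≤ (S \ {u, v, x}).card + 2 := by
          calc S₀.card ≤ (insert v (S \ {u, v, x})).card + 1 := Finset.card_insert_le _ _
            _ ≤ (S \ {u, v, x}).card + 1 + 1 :=
              Nat.add_le_add_right (Finset.card_insert_le _ _) 1
        have h2 : (S₀.subtype (· ∈ {w : V | w ≠ x})).card ≤ S₀.card := by
          rw [Finset.card_subtype]
          exact Finset.card_filter_le _ _
        omega
    · set S₀ : Finset V := insert u (S \ {u, v, x}) with hS₀def
      have memU : u ∈ S₀ := Finset.mem_insert_self _ _
      have key := forward_resolve G hG u v x huv hux hvx htw1 htw2 S S₀ hSr memU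
        (Finset.subset_insert _ _) (Or.inr hall)
      have hnx : ∀ w ∈ S₀, w ≠ x := by
        intro w hw
        rcases Finset.mem_insert.mp hw with rfl | hw
        · exact hux
        · have := (Finset.mem_sdiff.mp hw).2
          simp only [Finset.mem_insert, Finset.mem_singleton] at this
          push_neg at this
          exact this.2.2
      refine ⟨S₀.subtype _, ?_, ?_⟩
      · intro a b hab
        obtain ⟨w, hwS₀, hne⟩ := key ↑a ↑b a.2 b.2 (fun h => hab (Subtype.ext h))
        refine ⟨⟨w, hnx w hwS₀⟩, Finset.mem_coe.mpr (Finset.mem_subtype.mpr hwS₀), ?_⟩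
        rw [hdind, hdind]
        exact hne
      · have hs1b : s1 ∉ insert s2 (S \ {u, v, x}) := by
          intro hmem
          rcases Finset.mem_insert.mp hmem with h | h
          · exact hs12 h
          · exact (Finset.mem_sdiff.mp h).2 hs1m
        have hs2b : s2 ∉ S \ {u, v, x} :=
          fun h => (Finset.mem_sdiff.mp h).2 hs2m
        have hsub2 : insert s1 (insert s2 (S \ {u, v, x})) ⊆ S := by
          intro w hw
          rcases Finset.mem_insert.mp hw with rfl | hw
          · exact hs1S
          rcases Finset.mem_insert.mp hw with rfl | hw
          · exact hs2S
          · exact (Finset.mem_sdiff.mp hw).1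
        have hcount : (S \ {u, v, x}).card + 2 ≤ S.card := by
          have := Finset.card_le_card hsub2
          rw [Finset.card_insert_of_notMem hs1b, Finset.card_insert_of_notMem hs2b] at this
          omega
        have h1 : S₀.card ≤ (S \ {u, v, x}).card + 1 := Finset.card_insert_le _ _
        have h2 : (S₀.subtype (· ∈ {w : V | w ≠ x})).card ≤ S₀.card := by
          rw [Finset.card_subtype]
          exact Finset.card_filter_le _ _
        omega
  · rintro ⟨T, hT, hcard⟩
    refine ⟨insert x (T.image Subtype.val), ?_, ?_⟩
    · intro a b hab
      by_cases ha : a = x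
      · subst ha
        refine ⟨a, by simp, ?_⟩
        rw [SimpleGraph.dist_self]
        exact ((hG.pos_dist_of_ne hab).ne').symm
      · by_cases hb : b = x
        · subst hb
          refine ⟨b, by simp, ?_⟩
          rw [SimpleGraph.dist_self]
          exact (hG.pos_dist_of_ne (Ne.symm hab)).ne'
        · obtain ⟨w, hw, hne⟩ := hT ⟨a, ha⟩ ⟨b, hb⟩ (fun h => hab (congrArg Subtype.val h))
          refine ⟨↑w, ?_, ?_⟩
          · exact Finset.mem_coe.mpr (Finset.mem_insert_of_mem
              (Finset.mem_image_of_mem _ (Finset.mem_coe.mp hw)))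
          · rw [hdind w ⟨a, ha⟩, hdind w ⟨b, hb⟩] at hne
            exact hne
    · calc (insert x (T.image Subtype.val)).card ≤ (T.image Subtype.val).card + 1 :=
            Finset.card_insert_le _ _
        _ ≤ T.card + 1 := Nat.add_le_add_right (Finset.card_image_le) 1
        _ ≤ (k - 1) + 1 := Nat.add_le_add_right hcard 1
        _ ≤ k := by omega
end

section
/- Let G be a connected simple graph, X a vertex cover of G, and I = V(G) \ X. Let F ⊆ I be a set such that every vertex u ∈ I \ F has a distinct open neighborhood from every other vertex of I \ F (no two vertices of I \ F are false twins). Then X ∪ F is a resolving set of G. -/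
theorem stmt_7 {V : Type*} (G : SimpleGraph V) (hG : G.Connected)
    (X : Set V) (hX : ∀ a b : V, G.Adj a b → a ∈ X ∨ b ∈ X)
    (F : Set V) (hF : F ⊆ Xᶜ)
    (hdist : ∀ u v : V, u ∈ Xᶜ \ F → v ∈ Xᶜ \ F → u ≠ v →
      G.neighborSet u ≠ G.neighborSet v) :
    resolvingSet G (X ∪ F) := by
  intro x y hxy
  by_cases hx : x ∈ X ∪ F
  · refine ⟨x, hx, ?_⟩
    have h0 : G.dist x y ≠ 0 := fun h => hxy (hG.dist_eq_zero_iff.mp h)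
    simpa [SimpleGraph.dist_self] using h0.symm
  by_cases hy : y ∈ X ∪ F
  · refine ⟨y, hy, ?_⟩
    have h0 : G.dist y x ≠ 0 := fun h => hxy.symm (hG.dist_eq_zero_iff.mp h)
    simpa [SimpleGraph.dist_self] using h0
  have hx' : x ∈ Xᶜ \ F := ⟨fun h => hx (Or.inl h), fun h => hx (Or.inr h)⟩
  have hy' : y ∈ Xᶜ \ F := ⟨fun h => hy (Or.inl h), fun h => hy (Or.inr h)⟩
  have hne := hdist x y hx' hy' hxy
  have : ∃ z, (G.Adj x z ∧ ¬ G.Adj y z) ∨ (G.Adj y z ∧ ¬ G.Adj x z) := by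
    by_contra h
    push_neg at h
    apply hne
    ext z
    exact ⟨fun hz => (h z).1 hz, fun hz => (h z).2 hz⟩
  obtain ⟨z, hz⟩ := this
  have hzX : z ∈ X := by
    rcases hz with ⟨h1, _⟩ | ⟨h1, _⟩
    · rcases hX x z h1 with h | h
      · exact absurd h hx'.1
      · exact h
    · rcases hX y z h1 with h | h
      · exact absurd h hy'.1
      · exact h
  refine ⟨z, Or.inl hzX, ?_⟩
  rcases hz with ⟨h1, h2⟩ | ⟨h1, h2⟩
  · have hd1 : G.dist z x = 1 := SimpleGraph.dist_eq_one_iff_adj.mpr h1.symm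
    have hd2 : G.dist z y ≠ 1 := fun h =>
      h2 (SimpleGraph.dist_eq_one_iff_adj.mp h).symm
    rw [hd1]; exact fun h => hd2 h.symm
  · have hd1 : G.dist z y = 1 := SimpleGraph.dist_eq_one_iff_adj.mpr h1.symm
    have hd2 : G.dist z x ≠ 1 := fun h =>
      h2 (SimpleGraph.dist_eq_one_iff_adj.mp h).symm
    rw [hd1]; exact hd2
end

section
/- Let G be a connected simple graph containing six pairwise false twins t₁, …, t₆ that are not true twins and not simplicial. Then G has a geodetic set of size at most k if and only if G − t₁ has a geodetic set of size at most k. -/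
def simplicialVertex {V : Type*} (G : SimpleGraph V) (v : V) : Prop :=
  ∀ x ∈ G.neighborSet v, ∀ y ∈ G.neighborSet v, x ≠ y → G.Adj x y

def geodeticSet {V : Type*} (G : SimpleGraph V) (S : Set V) : Prop :=
  ∀ u : V, ∃ s₁ ∈ S, ∃ s₂ ∈ S, G.dist s₁ u + G.dist u s₂ = G.dist s₁ s₂

private lemma dist_hom_le' {V W : Type*} {G : SimpleGraph V} {H : SimpleGraph W} (f : G →g H)
    {a b : V} (h : G.Reachable a b) : H.dist (f a) (f b) ≤ G.dist a b := by
  obtain ⟨p, hp⟩ := h.exists_walk_length_eq_dist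
  calc H.dist (f a) (f b) ≤ (p.map f).length := SimpleGraph.dist_le _
  _ = p.length := p.length_map f
  _ = G.dist a b := hp

private lemma walk_lift' {V : Type*} {G : SimpleGraph V} {t0 : V} {a b : V} (p : G.Walk a b) :
    t0 ∉ p.support → ∀ (ha : a ≠ t0) (hb : b ≠ t0),
    ∃ q : (G.induce {z : V | z ≠ t0}).Walk ⟨a, ha⟩ ⟨b, hb⟩, q.length = p.length := by
  induction p with
  | nil => exact fun _ ha hb => ⟨SimpleGraph.Walk.nil, rfl⟩
  | @cons u v w h p ih =>
    intro hp ha hb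
    rw [SimpleGraph.Walk.support_cons] at hp
    have hp' : t0 ∉ p.support := fun hm => hp (List.mem_cons_of_mem _ hm)
    have hv : v ≠ t0 := fun e => hp' (by rw [← e]; exact p.start_mem_support)
    obtain ⟨q, hq⟩ := ih hp' hv hb
    exact ⟨SimpleGraph.Walk.cons (by exact h) q, by exact congrArg (· + 1) hq⟩

theorem stmt_11 {V : Type*} [Fintype V] [DecidableEq V]
    (G : SimpleGraph V) (hG : G.Connected)
    (t : Fin 6 → V) (hinj : Function.Injective t)
    (htwin : ∀ i j : Fin 6, G.neighborSet (t i) = G.neighborSet (t j))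
    (hnadj : ∀ i j : Fin 6, ¬ G.Adj (t i) (t j))
    (hns : ∀ i : Fin 6, ¬ simplicialVertex G (t i))
    (k : ℕ)
    (hG' : (G.induce {z : V | z ≠ t 0}).Connected) :
    (∃ S : Finset V, geodeticSet G ↑S ∧ S.card ≤ k) ↔
      (∃ S : Finset ↥{z : V | z ≠ t 0},
        geodeticSet (G.induce {z : V | z ≠ t 0}) ↑S ∧ S.card ≤ k) := by
  classical
  set G' := G.induce {z : V | z ≠ t 0} with hG'def
  have hne : ∀ i j : Fin 6, i ≠ j → t i ≠ t j := fun i j h e => h (hinj e)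
  have dcomm : ∀ a b : V, G.dist a b = G.dist b a := fun a b => SimpleGraph.dist_comm
  have adjtwin : ∀ (i j : Fin 6) (w : V), G.Adj (t i) w → G.Adj (t j) w := by
    intro i j w h
    have : w ∈ G.neighborSet (t j) := (htwin i j) ▸ (h : w ∈ G.neighborSet (t i))
    exact this
  -- non-simplicial witnesses
  have hns0 := hns 0
  unfold simplicialVertex at hns0
  push_neg at hns0
  obtain ⟨x, hx, y, hy, hxyne, hxyn⟩ := hns0
  rw [SimpleGraph.mem_neighborSet] at hx hy
  have hax : ∀ i : Fin 6, G.Adj (t i) x := fun i => adjtwin 0 i x hx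
  have hay : ∀ i : Fin 6, G.Adj (t i) y := fun i => adjtwin 0 i y hy
  have hxt : ∀ i : Fin 6, x ≠ t i := by
    intro i e
    have := hx; rw [e] at this; exact hnadj 0 i this
  have hyt : ∀ i : Fin 6, y ≠ t i := by
    intro i e
    have := hy; rw [e] at this; exact hnadj 0 i this
  -- twin substitution homomorphisms
  have fhom : ∀ i j : Fin 6, ∃ f : G →g G, f (t i) = t j ∧ ∀ v, v ≠ t i → f v = v := by
    intro i j
    refine ⟨⟨fun v => if v = t i then t j else v, ?_⟩, if_pos rfl, fun v hv => if_neg hv⟩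
    intro a b hab
    by_cases ha : a = t i <;> by_cases hb : b = t i
    · rw [ha, hb] at hab; exact absurd hab (G.loopless.irrefl _)
    · rw [if_pos ha, if_neg hb]
      exact adjtwin i j b (by rw [← ha]; exact hab)
    · rw [if_neg ha, if_pos hb]
      exact (adjtwin i j a (by rw [← hb]; exact hab.symm)).symm
    · rw [if_neg ha, if_neg hb]; exact hab
  have dsub : ∀ (i j : Fin 6) (w : V), w ≠ t i → w ≠ t j →
      G.dist (t i) w = G.dist (t j) w := by
    intro i j w hwi hwj
    obtain ⟨f, hf1, hf2⟩ := fhom i j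
    obtain ⟨g, hg1, hg2⟩ := fhom j i
    apply le_antisymm
    · have := dist_hom_le' g (hG.preconnected (t j) w)
      rwa [hg1, hg2 w hwj] at this
    · have := dist_hom_le' f (hG.preconnected (t i) w)
      rwa [hf1, hf2 w hwi] at this
  have dadj : ∀ {a b : V}, G.Adj a b → G.dist a b = 1 :=
    fun h => SimpleGraph.dist_eq_one_iff_adj.mpr h
  have d2 : ∀ a b : V, a ≠ b → ¬ G.Adj a b → 2 ≤ G.dist a b := by
    intro a b h1 h2
    have e0 : G.dist a b ≠ 0 := Nat.pos_iff_ne_zero.mp (hG.pos_dist_of_ne h1)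
    have e1 : G.dist a b ≠ 1 := fun e => h2 (SimpleGraph.dist_eq_one_iff_adj.mp e)
    omega
  have dtt : ∀ i j : Fin 6, i ≠ j → G.dist (t i) (t j) = 2 := by
    intro i j hij
    apply le_antisymm
    · exact SimpleGraph.dist_le
        (SimpleGraph.Walk.cons (hax i) (SimpleGraph.Walk.cons (hax j).symm SimpleGraph.Walk.nil))
    · exact d2 _ _ (hne i j hij) (hnadj i j)
  have dxy : G.dist x y = 2 := by
    apply le_antisymm
    · exact SimpleGraph.dist_le
        (SimpleGraph.Walk.cons (hax 0).symm (SimpleGraph.Walk.cons (hay 0) SimpleGraph.Walk.nil))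
    · exact d2 _ _ hxyne hxyn
  -- distances in the induced graph agree with G
  have dEq : ∀ a b : ↥{z : V | z ≠ t 0}, G'.dist a b = G.dist ↑a ↑b := by
    intro a b
    apply le_antisymm
    · obtain ⟨p, hp⟩ := (hG.preconnected ↑a ↑b).exists_walk_length_eq_dist
      obtain ⟨f, hf1, hf2⟩ := fhom 0 1
      have ea : f ↑a = ↑a := hf2 _ a.2
      have eb : f ↑b = ↑b := hf2 _ b.2
      let q1 : G.Walk ↑a ↑b := (p.map f).copy ea eb
      have hsup : t 0 ∉ q1.support := by
        simp only [q1, SimpleGraph.Walk.support_copy, SimpleGraph.Walk.support_map]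
        intro hmem
        obtain ⟨v, hv, hv2⟩ := List.mem_map.mp hmem
        by_cases hvt : v = t 0
        · rw [hvt, hf1] at hv2; exact hne 1 0 (by decide) hv2
        · rw [hf2 v hvt] at hv2; exact hvt hv2
      obtain ⟨q, hq⟩ := walk_lift' q1 hsup a.2 b.2
      have hlen : q1.length = G.dist ↑a ↑b := by
        simp only [q1, SimpleGraph.Walk.length_copy]
        rw [p.length_map f, hp]
      have h3 : G'.dist a b ≤ q.length := SimpleGraph.dist_le q
      rw [hq, hlen] at h3
      exact h3
    · exact dist_hom_le' (⟨Subtype.val, fun h => h⟩ : G' →g G) (hG'.preconnected a b)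
  have txm : ∀ (i : Fin 6), i ≠ 0 → t i ∈ {z : V | z ≠ t 0} := fun i h => hne i 0 h
  have hxm : x ∈ {z : V | z ≠ t 0} := hxt 0
  have hym : y ∈ {z : V | z ≠ t 0} := hyt 0
  constructor
  · -- forward direction
    rintro ⟨S, hS, hSk⟩
    have hsub1 : t 0 ∈ S → (S.subtype (· ∈ {z : V | z ≠ t 0})).card ≤ S.card - 1 := by
      intro h0
      rw [Finset.card_subtype]
      have hss : S.filter (· ∈ {z : V | z ≠ t 0}) ⊆ S.erase (t 0) := by
        intro z hz
        rw [Finset.mem_filter] at hz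
        exact Finset.mem_erase.mpr ⟨hz.2, hz.1⟩
      calc (S.filter (· ∈ {z : V | z ≠ t 0})).card ≤ (S.erase (t 0)).card :=
          Finset.card_le_card hss
      _ = S.card - 1 := Finset.card_erase_of_mem h0
    by_cases h0 : t 0 ∈ S
    · by_cases hex : ∃ m : Fin 6, m ≠ 0 ∧ t m ∉ S
      · -- replace t 0 by a twin not in S
        obtain ⟨m, hm0, hmS⟩ := hex
        refine ⟨insert ⟨t m, txm m hm0⟩ (S.subtype (· ∈ {z : V | z ≠ t 0})), ?_, ?_⟩
        · intro u
          by_cases hu : u = ⟨t m, txm m hm0⟩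
          · exact ⟨u, by simp [hu], u, by simp [hu], by simp [SimpleGraph.dist_self]⟩
          · have hum : (↑u : V) ≠ t m := fun e => hu (Subtype.ext e)
            obtain ⟨s₁, hs₁, s₂, hs₂, heq⟩ := hS ↑u
            rw [Finset.mem_coe] at hs₁ hs₂
            by_cases e₁ : s₁ = t 0 <;> by_cases e₂ : s₂ = t 0
            · exfalso
              rw [e₁, e₂, SimpleGraph.dist_self] at heq
              have : G.dist (t 0) ↑u = 0 := by omega
              exact u.2 ((hG.dist_eq_zero_iff.mp this).symm)
            · refine ⟨⟨t m, txm m hm0⟩, by simp, ⟨s₂, e₂⟩,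
                by simp [Finset.mem_coe, Finset.mem_subtype, hs₂], ?_⟩
              rw [dEq, dEq, dEq]
              have h1 : G.dist (t m) ↑u = G.dist (t 0) ↑u := dsub m 0 ↑u hum u.2
              have h2 : G.dist (t m) s₂ = G.dist (t 0) s₂ :=
                dsub m 0 s₂ (fun e => hmS (e ▸ hs₂)) e₂
              rw [e₁] at heq
              show G.dist (t m) ↑u + G.dist ↑u s₂ = G.dist (t m) s₂
              omega
            · refine ⟨⟨s₁, e₁⟩, by simp [Finset.mem_coe, Finset.mem_subtype, hs₁],
                ⟨t m, txm m hm0⟩, by simp, ?_⟩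
              rw [dEq, dEq, dEq]
              have h1 : G.dist (t m) ↑u = G.dist (t 0) ↑u := dsub m 0 ↑u hum u.2
              have h2 : G.dist (t m) s₁ = G.dist (t 0) s₁ :=
                dsub m 0 s₁ (fun e => hmS (e ▸ hs₁)) e₁
              rw [e₂] at heq
              show G.dist s₁ ↑u + G.dist ↑u (t m) = G.dist s₁ (t m)
              rw [dcomm ↑u (t m), dcomm s₁ (t m)]
              rw [dcomm ↑u (t 0), dcomm s₁ (t 0)] at heq
              omega
            · exact ⟨⟨s₁, e₁⟩, by simp [Finset.mem_coe, Finset.mem_subtype, hs₁], ⟨s₂, e₂⟩,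
                by simp [Finset.mem_coe, Finset.mem_subtype, hs₂],
                by rw [dEq, dEq, dEq]; exact heq⟩
        · have h1 : 1 ≤ S.card := Finset.card_pos.mpr ⟨t 0, h0⟩
          have := hsub1 h0
          calc (insert ⟨t m, txm m hm0⟩ (S.subtype (· ∈ {z : V | z ≠ t 0}))).card
              ≤ (S.subtype (· ∈ {z : V | z ≠ t 0})).card + 1 := Finset.card_insert_le _ _
          _ ≤ k := by omega
      · -- all twins in S
        push_neg at hex
        have hall : ∀ i : Fin 6, t i ∈ S := by
          intro i
          by_cases hi : i = 0
          · rw [hi]; exact h0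
          · exact hex i hi
        set B : Finset ↥{z : V | z ≠ t 0} :=
          ((S.subtype (· ∈ {z : V | z ≠ t 0})).erase ⟨t 4, txm 4 (by decide)⟩).erase
            ⟨t 5, txm 5 (by decide)⟩ with hB
        have memtwin : ∀ (i : Fin 6) (hi : i ≠ 0), i ≠ 4 → i ≠ 5 →
            (⟨t i, txm i hi⟩ : ↥{z : V | z ≠ t 0}) ∈
              insert ⟨x, hxm⟩ (insert ⟨y, hym⟩ B) := by
          intro i hi0 hi4 hi5
          apply Finset.mem_insert_of_mem
          apply Finset.mem_insert_of_mem
          rw [hB]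
          apply Finset.mem_erase.mpr
          refine ⟨fun e => hne i 5 hi5 (congrArg Subtype.val e), ?_⟩
          apply Finset.mem_erase.mpr
          exact ⟨fun e => hne i 4 hi4 (congrArg Subtype.val e),
            Finset.mem_subtype.mpr (hall i)⟩
        have memS : ∀ z : V, z ∈ S → (∀ i : Fin 6, z ≠ t i) →
            ∀ (hz : z ∈ {w : V | w ≠ t 0}),
            (⟨z, hz⟩ : ↥{w : V | w ≠ t 0}) ∈ insert ⟨x, hxm⟩ (insert ⟨y, hym⟩ B) := by
          intro z hzS hzt hz
          apply Finset.mem_insert_of_mem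
          apply Finset.mem_insert_of_mem
          rw [hB]
          apply Finset.mem_erase.mpr
          refine ⟨fun e => hzt 5 (congrArg Subtype.val e), ?_⟩
          apply Finset.mem_erase.mpr
          exact ⟨fun e => hzt 4 (congrArg Subtype.val e), Finset.mem_subtype.mpr hzS⟩
        refine ⟨insert ⟨x, hxm⟩ (insert ⟨y, hym⟩ B), ?_, ?_⟩
        · intro u
          by_cases hut : ∃ j : Fin 6, (↑u : V) = t j
          · obtain ⟨j, hj⟩ := hut
            refine ⟨⟨x, hxm⟩, by simp, ⟨y, hym⟩, by simp, ?_⟩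
            rw [dEq, dEq, dEq]
            show G.dist x ↑u + G.dist ↑u y = G.dist x y
            rw [hj, dadj (hax j).symm, dadj (hay j), dxy]
          · push_neg at hut
            by_cases hun : G.Adj (t 0) ↑u
            · refine ⟨⟨t 1, txm 1 (by decide)⟩,
                Finset.mem_coe.mpr (memtwin 1 (by decide) (by decide) (by decide)),
                ⟨t 2, txm 2 (by decide)⟩,
                Finset.mem_coe.mpr (memtwin 2 (by decide) (by decide) (by decide)), ?_⟩
              rw [dEq, dEq, dEq]
              show G.dist (t 1) ↑u + G.dist ↑u (t 2) = G.dist (t 1) (t 2)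
              rw [dadj (adjtwin 0 1 ↑u hun), dcomm ↑u (t 2),
                dadj (adjtwin 0 2 ↑u hun), dtt 1 2 (by decide)]
            · have dtu : ∀ i : Fin 6, 2 ≤ G.dist (t i) ↑u := by
                intro i
                refine d2 _ _ (fun e => hut i e.symm) (fun h => hun (adjtwin i 0 ↑u h))
              obtain ⟨s₁, hs₁, s₂, hs₂, heq⟩ := hS ↑u
              rw [Finset.mem_coe] at hs₁ hs₂
              by_cases w₁ : ∃ i : Fin 6, s₁ = t i <;> by_cases w₂ : ∃ j : Fin 6, s₂ = t j
              · exfalso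
                obtain ⟨i, rfl⟩ := w₁
                obtain ⟨j, rfl⟩ := w₂
                have h1 := dtu i
                have h2 := dtu j
                rw [dcomm ↑u (t j)] at heq
                have h3 : G.dist (t i) (t j) ≤ 2 := by
                  by_cases hij : i = j
                  · rw [hij, SimpleGraph.dist_self]; omega
                  · rw [dtt i j hij]
                omega
              · obtain ⟨i, rfl⟩ := w₁
                push_neg at w₂
                have hs₂0 : s₂ ∈ {z : V | z ≠ t 0} := w₂ 0
                refine ⟨⟨t 3, txm 3 (by decide)⟩,
                  Finset.mem_coe.mpr (memtwin 3 (by decide) (by decide) (by decide)),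
                  ⟨s₂, hs₂0⟩, Finset.mem_coe.mpr (memS s₂ hs₂ w₂ hs₂0), ?_⟩
                rw [dEq, dEq, dEq]
                have h1 : G.dist (t 3) ↑u = G.dist (t i) ↑u :=
                  dsub 3 i ↑u (hut 3) (hut i)
                have h2 : G.dist (t 3) s₂ = G.dist (t i) s₂ := dsub 3 i s₂ (w₂ 3) (w₂ i)
                show G.dist (t 3) ↑u + G.dist ↑u s₂ = G.dist (t 3) s₂
                omega
              · obtain ⟨j, rfl⟩ := w₂
                push_neg at w₁
                have hs₁0 : s₁ ∈ {z : V | z ≠ t 0} := w₁ 0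
                refine ⟨⟨s₁, hs₁0⟩, Finset.mem_coe.mpr (memS s₁ hs₁ w₁ hs₁0),
                  ⟨t 3, txm 3 (by decide)⟩,
                  Finset.mem_coe.mpr (memtwin 3 (by decide) (by decide) (by decide)), ?_⟩
                rw [dEq, dEq, dEq]
                have h1 : G.dist (t 3) ↑u = G.dist (t j) ↑u :=
                  dsub 3 j ↑u (hut 3) (hut j)
                have h2 : G.dist (t 3) s₁ = G.dist (t j) s₁ := dsub 3 j s₁ (w₁ 3) (w₁ j)
                show G.dist s₁ ↑u + G.dist ↑u (t 3) = G.dist s₁ (t 3)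
                rw [dcomm ↑u (t 3), dcomm s₁ (t 3)]
                rw [dcomm ↑u (t j), dcomm s₁ (t j)] at heq
                omega
              · push_neg at w₁; push_neg at w₂
                exact ⟨⟨s₁, w₁ 0⟩, Finset.mem_coe.mpr (memS s₁ hs₁ w₁ (w₁ 0)),
                  ⟨s₂, w₂ 0⟩, Finset.mem_coe.mpr (memS s₂ hs₂ w₂ (w₂ 0)),
                  by rw [dEq, dEq, dEq]; exact heq⟩
        · -- cardinality
          have h4m : (⟨t 4, txm 4 (by decide)⟩ : ↥{z : V | z ≠ t 0}) ∈
              S.subtype (· ∈ {z : V | z ≠ t 0}) := Finset.mem_subtype.mpr (hall 4)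
          have h5m : (⟨t 5, txm 5 (by decide)⟩ : ↥{z : V | z ≠ t 0}) ∈
              (S.subtype (· ∈ {z : V | z ≠ t 0})).erase ⟨t 4, txm 4 (by decide)⟩ :=
            Finset.mem_erase.mpr ⟨fun e => hne 5 4 (by decide) (congrArg Subtype.val e),
              Finset.mem_subtype.mpr (hall 5)⟩
          have hB1 : B.card = (S.subtype (· ∈ {z : V | z ≠ t 0})).card - 2 := by
            rw [hB, Finset.card_erase_of_mem h5m, Finset.card_erase_of_mem h4m]; omega
          have hc2 : 2 ≤ (S.subtype (· ∈ {z : V | z ≠ t 0})).card := by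
            have hpair : ({⟨t 4, txm 4 (by decide)⟩, ⟨t 5, txm 5 (by decide)⟩} :
                Finset ↥{z : V | z ≠ t 0}) ⊆ S.subtype (· ∈ {z : V | z ≠ t 0}) := by
              intro z hz
              rw [Finset.mem_insert, Finset.mem_singleton] at hz
              rcases hz with rfl | rfl
              · exact Finset.mem_subtype.mpr (hall 4)
              · exact Finset.mem_subtype.mpr (hall 5)
            have hcc := Finset.card_le_card hpair
            rwa [Finset.card_insert_of_notMem (by
              simp only [Finset.mem_singleton]
              exact fun e => hne 4 5 (by decide) (congrArg Subtype.val e)),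
              Finset.card_singleton] at hcc
          have h1 : 1 ≤ S.card := Finset.card_pos.mpr ⟨t 0, h0⟩
          have hs1 := hsub1 h0
          have hi1 := Finset.card_insert_le (⟨y, hym⟩ : ↥{z : V | z ≠ t 0}) B
          have hi2 := Finset.card_insert_le (⟨x, hxm⟩ : ↥{z : V | z ≠ t 0})
            (insert ⟨y, hym⟩ B)
          omega
    · -- t 0 ∉ S
      refine ⟨S.subtype (· ∈ {z : V | z ≠ t 0}), ?_, ?_⟩
      · intro u
        obtain ⟨s₁, hs₁, s₂, hs₂, heq⟩ := hS ↑u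
        rw [Finset.mem_coe] at hs₁ hs₂
        have e₁ : s₁ ∈ {z : V | z ≠ t 0} := fun e => h0 (e ▸ hs₁)
        have e₂ : s₂ ∈ {z : V | z ≠ t 0} := fun e => h0 (e ▸ hs₂)
        exact ⟨⟨s₁, e₁⟩, by simp [Finset.mem_coe, Finset.mem_subtype, hs₁], ⟨s₂, e₂⟩,
          by simp [Finset.mem_coe, Finset.mem_subtype, hs₂],
          by rw [dEq, dEq, dEq]; exact heq⟩
      · rw [Finset.card_subtype]
        calc (S.filter (· ∈ {z : V | z ≠ t 0})).card ≤ S.card := Finset.card_filter_le _ _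
        _ ≤ k := hSk
  · -- backward direction
    rintro ⟨S', hS', hk⟩
    have dEq' : ∀ (a b : ↥{z : V | z ≠ t 0}),
        G'.dist a b = G.dist ↑a ↑b := dEq
    by_cases hw : ∃ w : ↥{z : V | z ≠ t 0}, (∃ j : Fin 6, (↑w : V) = t j) ∧
        ∃ s₁ ∈ S', ∃ s₂ ∈ S', s₁ ≠ w ∧ s₂ ≠ w ∧
          G'.dist s₁ w + G'.dist w s₂ = G'.dist s₁ s₂
    · -- a twin is internally covered : S' itself works
      obtain ⟨w, ⟨j, hwj⟩, s₁, hs₁, s₂, hs₂, e₁, e₂, heq⟩ := hw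
      refine ⟨S'.map ⟨Subtype.val, Subtype.val_injective⟩, ?_, by
        rw [Finset.card_map]; exact hk⟩
      intro u
      by_cases hu0 : u = t 0
      · refine ⟨↑s₁, Finset.mem_coe.mpr (Finset.mem_map_of_mem _ hs₁),
          ↑s₂, Finset.mem_coe.mpr (Finset.mem_map_of_mem _ hs₂), ?_⟩
        rw [dEq, dEq, dEq] at heq
        have hwj' : (↑w : V) = t j := hwj
        rw [hwj'] at heq
        have c₁ : (↑s₁ : V) ≠ t j := fun e => e₁ (Subtype.ext (e.trans hwj'.symm))
        have c₂ : (↑s₂ : V) ≠ t j := fun e => e₂ (Subtype.ext (e.trans hwj'.symm))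
        have h1 : G.dist (t j) ↑s₁ = G.dist (t 0) ↑s₁ := dsub j 0 ↑s₁ c₁ s₁.2
        have h2 : G.dist (t j) ↑s₂ = G.dist (t 0) ↑s₂ := dsub j 0 ↑s₂ c₂ s₂.2
        have h3 : G.dist ↑s₁ (t j) = G.dist (t j) ↑s₁ := dcomm _ _
        have h4 : G.dist ↑s₁ (t 0) = G.dist (t 0) ↑s₁ := dcomm _ _
        rw [hu0]
        omega
      · obtain ⟨w₁, hw₁, w₂, hw₂, heq2⟩ := hS' ⟨u, hu0⟩
        rw [Finset.mem_coe] at hw₁ hw₂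
        refine ⟨↑w₁, Finset.mem_coe.mpr (Finset.mem_map_of_mem _ hw₁),
          ↑w₂, Finset.mem_coe.mpr (Finset.mem_map_of_mem _ hw₂), ?_⟩
        rw [dEq, dEq, dEq] at heq2
        exact heq2
    · -- all twins in S' and only trivially covered
      push_neg at hw
      have htS : ∀ (j : Fin 6) (hj : j ≠ 0), (⟨t j, txm j hj⟩ : ↥{z : V | z ≠ t 0}) ∈ S' := by
        intro j hj
        obtain ⟨s₁, hs₁, s₂, hs₂, he⟩ := hS' ⟨t j, txm j hj⟩
        rw [Finset.mem_coe] at hs₁ hs₂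
        by_cases c₁ : s₁ = ⟨t j, txm j hj⟩
        · rw [← c₁]; exact hs₁
        by_cases c₂ : s₂ = ⟨t j, txm j hj⟩
        · rw [← c₂]; exact hs₂
        exact absurd he (hw ⟨t j, txm j hj⟩ ⟨j, rfl⟩ s₁ hs₁ s₂ hs₂ c₁ c₂)
      set M : Finset V := S'.map ⟨Subtype.val, Subtype.val_injective⟩ with hM
      have memM : ∀ (j : Fin 6) (hj : j ≠ 0), t j ∈ M := by
        intro j hj
        rw [hM]
        exact Finset.mem_map_of_mem _ (htS j hj)
      set B : Finset V := (M.erase (t 4)).erase (t 5) with hB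
      have memtwin : ∀ (i : Fin 6), i ≠ 0 → i ≠ 4 → i ≠ 5 →
          t i ∈ insert x (insert y B) := by
        intro i hi0 hi4 hi5
        apply Finset.mem_insert_of_mem
        apply Finset.mem_insert_of_mem
        rw [hB]
        exact Finset.mem_erase.mpr ⟨hne i 5 hi5,
          Finset.mem_erase.mpr ⟨hne i 4 hi4, memM i hi0⟩⟩
      have memB : ∀ z : V, z ∈ M → (∀ i : Fin 6, z ≠ t i) → z ∈ insert x (insert y B) := by
        intro z hz hzt
        apply Finset.mem_insert_of_mem
        apply Finset.mem_insert_of_mem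
        rw [hB]
        exact Finset.mem_erase.mpr ⟨hzt 5, Finset.mem_erase.mpr ⟨hzt 4, hz⟩⟩
      refine ⟨insert x (insert y B), ?_, ?_⟩
      · intro u
        by_cases hut : ∃ j : Fin 6, u = t j
        · obtain ⟨j, rfl⟩ := hut
          refine ⟨x, by simp, y, by simp, ?_⟩
          rw [dadj (hax j).symm, dadj (hay j), dxy]
        · push_neg at hut
          by_cases hun : G.Adj (t 0) u
          · refine ⟨t 1, Finset.mem_coe.mpr (memtwin 1 (by decide) (by decide) (by decide)),
              t 2, Finset.mem_coe.mpr (memtwin 2 (by decide) (by decide) (by decide)), ?_⟩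
            rw [dadj (adjtwin 0 1 u hun), dcomm u (t 2),
              dadj (adjtwin 0 2 u hun), dtt 1 2 (by decide)]
          · have hu0 : u ∈ {z : V | z ≠ t 0} := hut 0
            have dtu : ∀ i : Fin 6, 2 ≤ G.dist (t i) u :=
              fun i => d2 _ _ (fun e => hut i e.symm) (fun h => hun (adjtwin i 0 u h))
            obtain ⟨s₁, hs₁, s₂, hs₂, he⟩ := hS' ⟨u, hu0⟩
            rw [Finset.mem_coe] at hs₁ hs₂
            rw [dEq, dEq, dEq] at he
            have hm₁ : (↑s₁ : V) ∈ M := Finset.mem_map_of_mem _ hs₁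
            have hm₂ : (↑s₂ : V) ∈ M := Finset.mem_map_of_mem _ hs₂
            have he' : G.dist ↑s₁ u + G.dist u ↑s₂ = G.dist ↑s₁ ↑s₂ := he
            by_cases w₁ : ∃ i : Fin 6, (↑s₁ : V) = t i <;>
              by_cases w₂ : ∃ j : Fin 6, (↑s₂ : V) = t j
            · exfalso
              obtain ⟨i, hi⟩ := w₁
              obtain ⟨j, hj⟩ := w₂
              rw [hi, hj] at he'
              have h1 := dtu i
              have h2 := dtu j
              rw [dcomm u (t j)] at he'
              have h3 : G.dist (t i) (t j) ≤ 2 := by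
                by_cases hij : i = j
                · rw [hij, SimpleGraph.dist_self]; omega
                · rw [dtt i j hij]
              omega
            · obtain ⟨i, hi⟩ := w₁
              push_neg at w₂
              refine ⟨t 3, Finset.mem_coe.mpr (memtwin 3 (by decide) (by decide) (by decide)),
                ↑s₂, Finset.mem_coe.mpr (memB ↑s₂ hm₂ w₂), ?_⟩
              rw [hi] at he'
              have h1 : G.dist (t 3) u = G.dist (t i) u :=
                dsub 3 i u (hut 3) (hut i)
              have h2 : G.dist (t 3) ↑s₂ = G.dist (t i) ↑s₂ := dsub 3 i ↑s₂ (w₂ 3) (w₂ i)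
              omega
            · obtain ⟨j, hj⟩ := w₂
              push_neg at w₁
              refine ⟨↑s₁, Finset.mem_coe.mpr (memB ↑s₁ hm₁ w₁),
                t 3, Finset.mem_coe.mpr (memtwin 3 (by decide) (by decide) (by decide)), ?_⟩
              rw [hj] at he'
              have h1 : G.dist (t 3) u = G.dist (t j) u :=
                dsub 3 j u (hut 3) (hut j)
              have h2 : G.dist (t 3) ↑s₁ = G.dist (t j) ↑s₁ := dsub 3 j ↑s₁ (w₁ 3) (w₁ j)
              rw [dcomm u (t 3), dcomm ↑s₁ (t 3)]
              rw [dcomm u (t j), dcomm ↑s₁ (t j)] at he'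
              omega
            · push_neg at w₁; push_neg at w₂
              exact ⟨↑s₁, Finset.mem_coe.mpr (memB ↑s₁ hm₁ w₁),
                ↑s₂, Finset.mem_coe.mpr (memB ↑s₂ hm₂ w₂), he'⟩
      · -- cardinality
        have h4m : t 4 ∈ M := memM 4 (by decide)
        have h5m : t 5 ∈ M.erase (t 4) :=
          Finset.mem_erase.mpr ⟨hne 5 4 (by decide), memM 5 (by decide)⟩
        have hB1 : B.card = M.card - 2 := by
          rw [hB, Finset.card_erase_of_mem h5m, Finset.card_erase_of_mem h4m]; omega
        have hc2 : 2 ≤ M.card := by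
          have hpair : ({t 4, t 5} : Finset V) ⊆ M := by
            intro z hz
            rw [Finset.mem_insert, Finset.mem_singleton] at hz
            rcases hz with rfl | rfl
            · exact memM 4 (by decide)
            · exact memM 5 (by decide)
          have hcc := Finset.card_le_card hpair
          rwa [Finset.card_insert_of_notMem (by
            simp only [Finset.mem_singleton]
            exact hne 4 5 (by decide)), Finset.card_singleton] at hcc
        have hMk : M.card ≤ k := by rw [hM, Finset.card_map]; exact hk
        have hi1 := Finset.card_insert_le y B
        have hi2 := Finset.card_insert_le x (insert y B)
        omega
end

section
/- Let G be a connected simple graph, X a vertex cover of G, and S the set of simplicial vertices of G. Then X ∪ S is a geodetic set of G. -/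
theorem stmt_12 {V : Type*} (G : SimpleGraph V) (hG : G.Connected)
    (X : Set V) (hX : ∀ a b : V, G.Adj a b → a ∈ X ∨ b ∈ X) :
    geodeticSet G (X ∪ {v : V | simplicialVertex G v}) := by
  intro u
  by_cases hu : u ∈ X ∪ {v : V | simplicialVertex G v}
  · exact ⟨u, hu, u, hu, by simp⟩
  · simp only [Set.mem_union, Set.mem_setOf_eq, not_or] at hu
    obtain ⟨huX, huS⟩ := hu
    simp only [simplicialVertex, not_forall] at huS
    obtain ⟨x, hx, y, hy, hxy, hnadj⟩ := huS
    rw [SimpleGraph.mem_neighborSet] at hx hy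
    have hxX : x ∈ X := (hX u x hx).resolve_left huX
    have hyX : y ∈ X := (hX u y hy).resolve_left huX
    refine ⟨x, Or.inl hxX, y, Or.inl hyX, ?_⟩
    have h1 : G.dist x u = 1 := SimpleGraph.dist_eq_one_iff_adj.mpr hx.symm
    have h2 : G.dist u y = 1 := SimpleGraph.dist_eq_one_iff_adj.mpr hy
    have hle : G.dist x y ≤ 2 := by
      have := G.dist_le ((hx.symm.toWalk).append hy.toWalk)
      simpa using this
    have hne : G.dist x y ≠ 0 := by
      intro h
      exact hxy (hG.dist_eq_zero_iff.mp h)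
    have hne1 : G.dist x y ≠ 1 := fun h => hnadj (SimpleGraph.dist_eq_one_iff_adj.mp h)
    rw [h1, h2]
    omega
end
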